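/- Let T ∈ G be elliptic with eigenvector (x,1), ‖x‖ < 1, and let M = ℂ·(x,1). Then H ⊕ ℂ = M ⊕ M^† (internal direct sum), T maps M^† bijectively onto M^†, the form A is positive definite on M^†, M^† is complete for the norm induced by A, and the restriction of T to M^† is a surjective linear isometry of the Hilbert space (M^†, A), i.e. a unitary operator of (M^†, A). -/

import Mathlib

noncomputable section

variable {H : Type*} [NormedAddCommGroup H] [InnerProductSpace ℂ H] [CompleteSpace H]

/-- The Hermitian form `A((x,z),(y,w)) = ⟨x,y⟩ - z·conj w` on `H ⊕ ℂ`, linear in the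
first argument (the paper's convention); `⟨x,y⟩` (linear in `x`) is `inner y x` in Mathlib. -/
def formA (u v : H × ℂ) : ℂ :=
  (inner ℂ v.1 u.1 : ℂ) - u.2 * (starRingEnd ℂ) v.2

/-- The standard inner product of the Hilbert space `H ⊕ ℂ`, linear in the first argument. -/
def ipStd (u v : H × ℂ) : ℂ :=
  (inner ℂ v.1 u.1 : ℂ) + u.2 * (starRingEnd ℂ) v.2

/-- Membership in the group `G` of bounded bijective linear maps preserving `A`. -/
def memG (T : (H × ℂ) →L[ℂ] (H × ℂ)) : Prop :=
  Function.Bijective T ∧ ∀ u v : H × ℂ, formA (T u) (T v) = formA u v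

/-- `T` is elliptic: it has an eigenvector `(x,1)` with `‖x‖ < 1`. -/
def IsEllipticG (T : (H × ℂ) →L[ℂ] (H × ℂ)) : Prop :=
  ∃ x : H, ‖x‖ < 1 ∧ ∃ μ : ℂ, T (x, 1) = μ • ((x, 1) : H × ℂ)

/-- Points `x` of the closed unit ball with `(x,1)` an eigenvector of `T`. -/
def fixedBall (T : (H × ℂ) →L[ℂ] (H × ℂ)) : Set H :=
  {x : H | ‖x‖ ≤ 1 ∧ ∃ μ : ℂ, T (x, 1) = μ • ((x, 1) : H × ℂ)}

/-- `T` is hyperbolic: not elliptic, with exactly two fixed points in the closed ball. -/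
def IsHyperbolicG (T : (H × ℂ) →L[ℂ] (H × ℂ)) : Prop :=
  ¬ IsEllipticG T ∧ ∃ x y : H, x ≠ y ∧ fixedBall T = {x, y}

/-- `T` is parabolic: not elliptic, with exactly one fixed point in the closed ball. -/
def IsParabolicG (T : (H × ℂ) →L[ℂ] (H × ℂ)) : Prop :=
  ¬ IsEllipticG T ∧ ∃ x : H, fixedBall T = {x}

/-- `M†`, the `A`-orthogonal complement of a subspace `M` of `H ⊕ ℂ`. -/
def daggerA (M : Submodule ℂ (H × ℂ)) : Submodule ℂ (H × ℂ) where
  carrier := {v | ∀ m ∈ M, formA v m = 0}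
  add_mem' := by
    intro a b ha hb m hm
    have h1 := ha m hm
    have h2 := hb m hm
    simp only [formA, Prod.fst_add, Prod.snd_add, inner_add_right, add_mul] at *
    linear_combination h1 + h2
  zero_mem' := by
    intro m hm
    simp [formA]
  smul_mem' := by
    intro c a ha m hm
    have h1 := ha m hm
    simp only [formA, Prod.smul_fst, Prod.smul_snd, inner_smul_right, smul_eq_mul] at *
    linear_combination c * h1

/-- The norm induced by `A` on a subspace where `A` is positive. -/
def nA (v : H × ℂ) : ℝ := Real.sqrt (formA v v).re

/-- Sequential completeness of a subspace for the norm induced by `A`. -/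
def CompleteForA (M : Submodule ℂ (H × ℂ)) : Prop :=
  ∀ f : ℕ → H × ℂ, (∀ n, f n ∈ M) →
    (∀ ε : ℝ, 0 < ε → ∃ N : ℕ, ∀ m n : ℕ, N ≤ m → N ≤ n → nA (f m - f n) < ε) →
    ∃ v ∈ M, ∀ ε : ℝ, 0 < ε → ∃ N : ℕ, ∀ n : ℕ, N ≤ n → nA (f n - v) < ε

end

section
variable {H : Type*} [NormedAddCommGroup H] [InnerProductSpace ℂ H] [CompleteSpace H]

set_option linter.unusedSectionVars false

lemma formA_pair (x : H) (v : H × ℂ) : formA v ((x,1) : H × ℂ) = (inner ℂ x v.1 : ℂ) - v.2 := by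
  simp [formA]

lemma mem_dagger_iff (x : H) (v : H × ℂ) :
    v ∈ daggerA (Submodule.span ℂ {((x,1) : H × ℂ)}) ↔ (inner ℂ x v.1 : ℂ) = v.2 := by
  constructor
  · intro h
    have := h ((x,1) : H × ℂ) (Submodule.mem_span_singleton_self _)
    rw [formA_pair, sub_eq_zero] at this
    exact this
  · intro h m hm
    obtain ⟨c, rfl⟩ := Submodule.mem_span_singleton.mp hm
    simp only [formA, Prod.smul_fst, Prod.smul_snd, inner_smul_left, smul_eq_mul, mul_one,
      map_one]
    rw [h]; ring

lemma formA_self_re (v : H × ℂ) :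
    (formA v v).re = ‖v.1‖^2 - Complex.normSq v.2 := by
  rw [formA, Complex.mul_conj, Complex.sub_re, Complex.ofReal_re,
    ← RCLike.re_eq_complex_re, inner_self_eq_norm_sq]

lemma formA_self_im (v : H × ℂ) : (formA v v).im = 0 := by
  rw [formA, Complex.mul_conj, Complex.sub_im, Complex.ofReal_im,
    ← RCLike.im_eq_complex_im, inner_self_im]
  ring

lemma normSq_snd_le (x : H) (v : H × ℂ) (h : (inner ℂ x v.1 : ℂ) = v.2) :
    Complex.normSq v.2 ≤ ‖x‖^2 * ‖v.1‖^2 := by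
  have h1 : ‖(inner ℂ x v.1 : ℂ)‖ ≤ ‖x‖ * ‖v.1‖ := norm_inner_le_norm x v.1
  have h2 : Complex.normSq v.2 = ‖v.2‖^2 := by
    rw [Complex.normSq_eq_norm_sq]
  rw [h2, ← h]
  nlinarith [norm_nonneg (inner ℂ x v.1 : ℂ), norm_nonneg x, norm_nonneg v.1]

lemma formA_self_re_lb (x : H) (v : H × ℂ) (h : (inner ℂ x v.1 : ℂ) = v.2) :
    (1 - ‖x‖^2) * ‖v.1‖^2 ≤ (formA v v).re := by
  rw [formA_self_re]
  have := normSq_snd_le x v h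
  nlinarith

lemma formA_self_re_ub (v : H × ℂ) : (formA v v).re ≤ ‖v.1‖^2 := by
  rw [formA_self_re]
  have := Complex.normSq_nonneg v.2
  linarith


/-- decomposition of `H ⊕ ℂ` along the time-like eigenvector of an
elliptic isometry; the restriction of `T` to `M†` is a unitary of the Hilbert space
`(M†, A)`. -/
theorem elliptic_decomposition (T : (H × ℂ) →L[ℂ] (H × ℂ)) (hT : memG T)
    (x : H) (hx : ‖x‖ < 1) (μ : ℂ) (heig : T (x, 1) = μ • ((x, 1) : H × ℂ))
    (M : Submodule ℂ (H × ℂ)) (hM : M = Submodule.span ℂ {((x, 1) : H × ℂ)}) :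
    -- internal direct sum H ⊕ ℂ = M ⊕ M†
    IsCompl M (daggerA M) ∧
    -- T maps M† bijectively onto M†
    Set.BijOn T (daggerA M : Set (H × ℂ)) (daggerA M : Set (H × ℂ)) ∧
    -- A is positive definite on M†
    (∀ v ∈ daggerA M, v ≠ 0 → 0 < (formA v v).re ∧ (formA v v).im = 0) ∧
    -- M† is complete for the norm induced by A
    CompleteForA (daggerA M) ∧
    -- the restriction of T to M† preserves A, i.e. it is a surjective linear
    -- isometry (unitary) of the Hilbert space (M†, A)
    (∀ u ∈ daggerA M, ∀ w ∈ daggerA M, formA (T u) (T w) = formA u w) := by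
  subst hM
  set e : H × ℂ := ((x,1) : H × ℂ) with he
  have hx2 : ‖x‖^2 < 1 := by nlinarith [norm_nonneg x]
  have hQe : (formA e e).re = ‖x‖^2 - 1 := by
    rw [formA_self_re]
    norm_num [he, Complex.normSq]
  have hQe_ne : formA e e ≠ 0 := by
    intro hcon
    rw [hcon] at hQe
    simp at hQe
    nlinarith
  have hμ : μ ≠ 0 := by
    intro h0
    have h1 : T e = 0 := by rw [heig, h0, zero_smul]
    have h2 : e = 0 := hT.1.1 (by rw [h1, map_zero])
    have : (1 : ℂ) = 0 := congrArg Prod.snd h2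
    exact one_ne_zero this
  -- key: membership in dagger
  have hmem : ∀ v : H × ℂ, v ∈ daggerA (Submodule.span ℂ {e}) ↔ (inner ℂ x v.1 : ℂ) = v.2 :=
    fun v => mem_dagger_iff x v
  refine ⟨?_, ?_, ?_, ?_, fun u _ w _ => hT.2 u w⟩
  · -- IsCompl
    constructor
    · rw [disjoint_iff]
      ext v
      simp only [Submodule.mem_inf, Submodule.mem_bot]
      constructor
      · rintro ⟨hv1, hv2⟩
        obtain ⟨c, rfl⟩ := Submodule.mem_span_singleton.mp hv1
        have h0 := hv2 e (Submodule.mem_span_singleton_self _)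
        have hlin : formA (c • e) e = c * formA e e := by
          simp only [formA, Prod.smul_fst, Prod.smul_snd, inner_smul_right, smul_eq_mul]
          ring
        rw [hlin] at h0
        rcases mul_eq_zero.mp h0 with h | h
        · rw [h, zero_smul]
        · exact absurd h hQe_ne
      · rintro rfl
        exact ⟨Submodule.zero_mem _, Submodule.zero_mem _⟩
    · rw [codisjoint_iff, eq_top_iff]
      intro v _
      rw [Submodule.mem_sup]
      set c : ℂ := formA v e / formA e e with hc
      refine ⟨c • e, Submodule.smul_mem _ _ (Submodule.mem_span_singleton_self _),
        v - c • e, ?_, by abel⟩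
      intro m hm
      obtain ⟨d, rfl⟩ := Submodule.mem_span_singleton.mp hm
      have hsub : formA (v - c • e) (d • e) =
          (starRingEnd ℂ d) * (formA v e - c * formA e e) := by
        simp only [formA, Prod.smul_fst, Prod.smul_snd, Prod.fst_sub, Prod.snd_sub,
          inner_smul_left, inner_smul_right, inner_sub_right, smul_eq_mul, map_mul]
        ring
      rw [hsub, hc, div_mul_cancel₀ _ hQe_ne, sub_self, mul_zero]
  · -- BijOn
    have hmaps : ∀ v ∈ daggerA (Submodule.span ℂ {e}), T v ∈ daggerA (Submodule.span ℂ {e}) := by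
      intro v hv m hm
      obtain ⟨d, rfl⟩ := Submodule.mem_span_singleton.mp hm
      have h1 : formA (T v) (T e) = formA v e := hT.2 v e
      have h2 : formA v e = 0 := hv e (Submodule.mem_span_singleton_self _)
      rw [heig] at h1
      have hlin : formA (T v) (μ • e) = (starRingEnd ℂ μ) * formA (T v) e := by
        simp only [formA, Prod.smul_fst, Prod.smul_snd, inner_smul_left, smul_eq_mul, map_mul]
        ring
      rw [hlin, h2] at h1
      have h3 : formA (T v) e = 0 := by
        rcases mul_eq_zero.mp h1 with h | h
        · exact absurd h (by simpa using hμ)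
        · exact h
      have hlin2 : formA (T v) (d • e) = (starRingEnd ℂ d) * formA (T v) e := by
        simp only [formA, Prod.smul_fst, Prod.smul_snd, inner_smul_left, smul_eq_mul, map_mul]
        ring
      rw [hlin2, h3, mul_zero]
    refine ⟨hmaps, fun a _ b _ hab => hT.1.1 hab, ?_⟩
    intro w hw
    obtain ⟨v, rfl⟩ := hT.1.2 w
    refine ⟨v, ?_, rfl⟩
    intro m hm
    obtain ⟨d, rfl⟩ := Submodule.mem_span_singleton.mp hm
    have h2 : formA (T v) e = 0 := hw e (Submodule.mem_span_singleton_self _)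
    have h1 : formA (T v) (T e) = formA v e := hT.2 v e
    rw [heig] at h1
    have hlin : formA (T v) (μ • e) = (starRingEnd ℂ μ) * formA (T v) e := by
      simp only [formA, Prod.smul_fst, Prod.smul_snd, inner_smul_left, smul_eq_mul, map_mul]
      ring
    rw [hlin, h2, mul_zero] at h1
    have hlin2 : formA v (d • e) = (starRingEnd ℂ d) * formA v e := by
      simp only [formA, Prod.smul_fst, Prod.smul_snd, inner_smul_left, smul_eq_mul, map_mul]
      ring
    rw [hlin2, ← h1, mul_zero]
  · -- positive definite
    intro v hv hv0
    have h := (hmem v).mp hv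
    constructor
    · have hlb := formA_self_re_lb x v h
      have hv1 : v.1 ≠ 0 := by
        intro h1
        apply hv0
        have h2 : v.2 = 0 := by rw [← h, h1, inner_zero_right]
        exact Prod.ext h1 h2
      have : 0 < ‖v.1‖ := norm_pos_iff.mpr hv1
      nlinarith [mul_pos (by linarith : (0:ℝ) < 1 - ‖x‖^2) (by positivity : (0:ℝ) < ‖v.1‖^2)]
    · exact formA_self_im v
  · -- completeness
    intro f hf hcau
    set c : ℝ := Real.sqrt (1 - ‖x‖^2) with hcdef
    have hcpos : 0 < c := Real.sqrt_pos.mpr (by linarith)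
    -- lower bound: c * ‖u.1‖ ≤ nA u for u in dagger
    have hlow : ∀ u : H × ℂ, (inner ℂ x u.1 : ℂ) = u.2 → c * ‖u.1‖ ≤ nA u := by
      intro u hu
      have h1 : (c * ‖u.1‖)^2 ≤ (formA u u).re := by
        have := formA_self_re_lb x u hu
        have hcs : c^2 = 1 - ‖x‖^2 := Real.sq_sqrt (by linarith)
        nlinarith [norm_nonneg u.1]
      have := Real.sqrt_le_sqrt h1
      rwa [Real.sqrt_sq (by positivity)] at this
    have hup : ∀ u : H × ℂ, nA u ≤ ‖u.1‖ := by
      intro u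
      have := Real.sqrt_le_sqrt (formA_self_re_ub u)
      rwa [Real.sqrt_sq (norm_nonneg _)] at this
    -- g := first components is Cauchy
    have hgc : CauchySeq (fun n => (f n).1) := by
      rw [Metric.cauchySeq_iff]
      intro ε hε
      obtain ⟨N, hN⟩ := hcau (c * ε) (by positivity)
      refine ⟨N, fun m hm n hn => ?_⟩
      have hsub : (inner ℂ x ((f m - f n).1) : ℂ) = (f m - f n).2 :=
        (hmem _).mp (Submodule.sub_mem _ (hf m) (hf n))
      have h1 := hlow _ hsub
      have h2 := hN m n hm hn
      have h3 : c * ‖(f m - f n).1‖ < c * ε := lt_of_le_of_lt h1 h2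
      have h4 : ‖(f m).1 - (f n).1‖ < ε := by
        have : ‖(f m - f n).1‖ < ε := by
          exact lt_of_mul_lt_mul_left h3 (le_of_lt hcpos)
        simpa using this
      rwa [dist_eq_norm]
    obtain ⟨y, hy⟩ := cauchySeq_tendsto_of_complete hgc
    refine ⟨(y, (inner ℂ x y : ℂ)), (hmem _).mpr rfl, ?_⟩
    intro ε hε
    rw [Metric.tendsto_atTop] at hy
    obtain ⟨N, hN⟩ := hy ε hε
    refine ⟨N, fun n hn => ?_⟩
    have h1 : nA (f n - (y, (inner ℂ x y : ℂ))) ≤ ‖(f n).1 - y‖ := by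
      have := hup (f n - (y, (inner ℂ x y : ℂ)))
      simpa using this
    calc nA (f n - (y, (inner ℂ x y : ℂ))) ≤ ‖(f n).1 - y‖ := h1
      _ < ε := by have := hN n hn; rwa [dist_eq_norm] at this

end
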